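/- Suppose Θ ⊂ ℝ^q is compact, Ω ⊂ ℝ^p is compact with measure 1, y^s : Ω × Θ → ℝ is twice continuously differentiable in θ with all first and second partial derivatives in θ uniformly bounded on Ω × Θ, and η ↦ θ*_η := argmin_{θ∈Θ} ‖η(·) - y^s(·,θ)‖²_{L2(Ω)} is well defined, unique, interior, and satisfies a Lipschitz bound ‖θ*_η - θ*_{η₀}‖ ≤ L ‖η - η₀‖_{L2(Ω)} near η₀. Then the map η ↦ V_η, where V_η = ∫_Ω ∂²/∂θ∂θᵀ [η(x) - y^s(x,θ)]² dx evaluated at θ = θ*_η, is Lipschitz in the Frobenius norm: there exists C > 0 such that ‖V_η - V_{η₀}‖_F ≤ C ‖η - η₀‖_{L2(Ω)} for all η in an L2-neighborhood of η₀. -/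

import Mathlib

open MeasureTheory

/-- The Euclidean norm on `ℝ^q`. -/
noncomputable def euclNorm {q : ℕ} (v : Fin q → ℝ) : ℝ :=
  Real.sqrt (∑ i, v i ^ 2)

/-- The Frobenius norm of a real square matrix. -/
noncomputable def frobNorm {q : ℕ} (M : Matrix (Fin q) (Fin q) ℝ) : ℝ :=
  Real.sqrt (∑ i, ∑ j, (M i j) ^ 2)

/-- The `L²(Ω)` distance between two functions. -/
noncomputable def L2dist {p : ℕ} (Ω : Set (Fin p → ℝ)) (η η₀ : (Fin p → ℝ) → ℝ) : ℝ :=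
  Real.sqrt (∫ x in Ω, (η x - η₀ x) ^ 2)

/-- The Hessian matrix `V_η = ∫_Ω ∂²/∂θ∂θᵀ [η(x) - yˢ(x,θ)]² dx` evaluated at a given `θ`;
entrywise `[V]_{jk} = 2∫_Ω [(∂_j yˢ)(∂_k yˢ) - (η - yˢ) ∂²_{jk} yˢ] dx`. -/
noncomputable def hessV {p q : ℕ} (Ω : Set (Fin p → ℝ))
    (ys : (Fin p → ℝ) → (Fin q → ℝ) → ℝ)
    (dys : (Fin p → ℝ) → (Fin q → ℝ) → Fin q → ℝ)
    (d2ys : (Fin p → ℝ) → (Fin q → ℝ) → Fin q → Fin q → ℝ)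
    (η : (Fin p → ℝ) → ℝ) (θ : Fin q → ℝ) : Matrix (Fin q) (Fin q) ℝ :=
  fun j k => ∫ x in Ω, 2 * (dys x θ j * dys x θ k - (η x - ys x θ) * d2ys x θ j k)

lemma abs_apply_le_euclNorm {q : ℕ} (v : Fin q → ℝ) (i : Fin q) : |v i| ≤ euclNorm v := by
  rw [euclNorm, ← Real.sqrt_sq_eq_abs]
  exact Real.sqrt_le_sqrt (Finset.single_le_sum (fun j _ => sq_nonneg (v j)) (Finset.mem_univ i))

lemma euclNorm_nonneg {q : ℕ} (v : Fin q → ℝ) : 0 ≤ euclNorm v := Real.sqrt_nonneg _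

lemma frobNorm_le_of_entries {q : ℕ} (M : Matrix (Fin q) (Fin q) ℝ) (B : ℝ) (hB : 0 ≤ B)
    (h : ∀ j k, |M j k| ≤ B) : frobNorm M ≤ q * B := by
  have hsum : ∑ i, ∑ j, (M i j) ^ 2 ≤ ((q : ℝ) * B) ^ 2 := by
    calc ∑ i, ∑ j, (M i j) ^ 2 ≤ ∑ _i : Fin q, ∑ _j : Fin q, B ^ 2 := by
          refine Finset.sum_le_sum fun i _ => Finset.sum_le_sum fun j _ => ?_
          rw [← sq_abs]
          exact pow_le_pow_left₀ (abs_nonneg _) (h i j) 2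
      _ = ((q : ℝ) * B) ^ 2 := by simp [Finset.sum_const]; ring
  calc frobNorm M ≤ Real.sqrt (((q : ℝ) * B) ^ 2) := Real.sqrt_le_sqrt hsum
    _ = (q : ℝ) * B := Real.sqrt_sq (by positivity)

lemma integral_abs_le_sqrt_integral_sq {α : Type*} [MeasurableSpace α] {μ : Measure α}
    [IsProbabilityMeasure μ] {f : α → ℝ} (hf : MemLp f 2 μ) :
    ∫ x, |f x| ∂μ ≤ Real.sqrt (∫ x, (f x) ^ 2 ∂μ) := by
  have hsq : Integrable (fun x => f x ^ 2) μ := hf.integrable_sq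
  have habs : Integrable (fun x => |f x|) μ := (hf.integrable one_le_two).abs
  set a := ∫ x, |f x| ∂μ with ha_def
  refine Real.le_sqrt_of_sq_le ?_
  have key : 0 ≤ ∫ x, (|f x| - a) ^ 2 ∂μ := integral_nonneg fun x => sq_nonneg _
  have expand : ∫ x, (|f x| - a) ^ 2 ∂μ = (∫ x, f x ^ 2 ∂μ) - a ^ 2 := by
    have heq : (fun x => (|f x| - a) ^ 2) = fun x => f x ^ 2 - 2 * a * |f x| + a ^ 2 := by
      funext x
      have : |f x| ^ 2 = f x ^ 2 := sq_abs _
      nlinarith [this]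
    have h1 : Integrable (fun x => f x ^ 2 - 2 * a * |f x|) μ := hsq.sub (habs.const_mul (2 * a))
    have h2 : Integrable (fun x => 2 * a * |f x|) μ := habs.const_mul (2 * a)
    rw [heq, integral_add h1 (integrable_const _), integral_sub hsq h2,
      integral_const_mul, integral_const]
    simp [← ha_def]
    ring
  linarith [expand ▸ key]

set_option maxHeartbeats 1000000 in
/-- Lipschitz continuity of the map `η ↦ V_η` (Hessian of the `L²`-discrepancy at the projected
calibration parameter `θ*_η`) in the Frobenius norm: there is `C > 0` such that
`‖V_η - V_{η₀}‖_F ≤ C ‖η - η₀‖_{L²(Ω)}` for all `η` in an `L²`-neighborhood of `η₀`. -/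
theorem hessV_lipschitz {p q : ℕ} (Ω : Set (Fin p → ℝ))
    (hΩc : IsCompact Ω) (hΩm : MeasurableSet Ω) (hvol : volume Ω = 1)
    (Θ : Set (Fin q → ℝ)) (hΘ : IsCompact Θ)
    (ys : (Fin p → ℝ) → (Fin q → ℝ) → ℝ)
    (dys : (Fin p → ℝ) → (Fin q → ℝ) → Fin q → ℝ)
    (d2ys : (Fin p → ℝ) → (Fin q → ℝ) → Fin q → Fin q → ℝ)
    -- measurability of the slices
    (hys_meas : ∀ θ ∈ Θ, AEStronglyMeasurable (fun x => ys x θ) (volume.restrict Ω))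
    (hdys_meas : ∀ θ ∈ Θ, AEStronglyMeasurable (fun x => dys x θ) (volume.restrict Ω))
    (hd2ys_meas : ∀ θ ∈ Θ, ∀ j k, AEStronglyMeasurable (fun x => d2ys x θ j k)
      (volume.restrict Ω))
    -- uniform boundedness and Lipschitz continuity (in θ) of yˢ and its first and second
    -- partial derivatives in θ, on Ω × Θ
    (C₁ : ℝ)
    (hys_bdd : ∀ x ∈ Ω, ∀ θ ∈ Θ, |ys x θ| ≤ C₁)
    (hdys_bdd : ∀ x ∈ Ω, ∀ θ ∈ Θ, euclNorm (dys x θ) ≤ C₁)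
    (hd2ys_bdd : ∀ x ∈ Ω, ∀ θ ∈ Θ, ∀ j k, |d2ys x θ j k| ≤ C₁)
    (hys_lip : ∀ x ∈ Ω, ∀ θ ∈ Θ, ∀ θ' ∈ Θ, |ys x θ - ys x θ'| ≤ C₁ * euclNorm (θ - θ'))
    (hdys_lip : ∀ x ∈ Ω, ∀ θ ∈ Θ, ∀ θ' ∈ Θ,
      euclNorm (dys x θ - dys x θ') ≤ C₁ * euclNorm (θ - θ'))
    (hd2ys_lip : ∀ x ∈ Ω, ∀ θ ∈ Θ, ∀ θ' ∈ Θ, ∀ j k,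
      |d2ys x θ j k - d2ys x θ' j k| ≤ C₁ * euclNorm (θ - θ'))
    -- the projected calibration parameter: well defined, valued in Θ, and Lipschitz near η₀
    (thetaStar : ((Fin p → ℝ) → ℝ) → (Fin q → ℝ))
    (hθΘ : ∀ η, thetaStar η ∈ Θ)
    (η₀ : (Fin p → ℝ) → ℝ) (hη₀ : MemLp η₀ 2 (volume.restrict Ω))
    (L ε₀ : ℝ) (hε₀ : 0 < ε₀)
    (hLip : ∀ η, MemLp η 2 (volume.restrict Ω) → L2dist Ω η η₀ ≤ ε₀ →
      euclNorm (thetaStar η - thetaStar η₀) ≤ L * L2dist Ω η η₀) :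
    ∃ C > 0, ∃ δ > 0, ∀ η, MemLp η 2 (volume.restrict Ω) → L2dist Ω η η₀ ≤ δ →
      frobNorm (hessV Ω ys dys d2ys η (thetaStar η) - hessV Ω ys dys d2ys η₀ (thetaStar η₀))
        ≤ C * L2dist Ω η η₀ := by
    -- probability measure on Ω
  haveI hprob : IsProbabilityMeasure (volume.restrict Ω) :=
    ⟨by rw [Measure.restrict_apply_univ]; exact hvol⟩
  set θ₀ := thetaStar η₀ with hθ₀def
  have hθ₀Θ : θ₀ ∈ Θ := hθΘ η₀
  -- Ω is nonempty, hence C₁ ≥ 0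
  have hΩne : Ω.Nonempty := by
    rcases Set.eq_empty_or_nonempty Ω with h | h
    · exfalso; rw [h] at hvol; simp at hvol
    · exact h
  obtain ⟨x₀, hx₀⟩ := hΩne
  have hC₁ : 0 ≤ C₁ := le_trans (abs_nonneg _) (hys_bdd x₀ hx₀ θ₀ hθ₀Θ)
  have hη₀_int : Integrable η₀ (volume.restrict Ω) := hη₀.integrable one_le_two
  set M := ∫ x in Ω, |η₀ x| with hMdef
  have hM : 0 ≤ M := integral_nonneg fun x => abs_nonneg _
  set L' := max L 0 with hL'def
  have hL' : 0 ≤ L' := le_max_right _ _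
  set K := 8 * C₁ ^ 2 * L' + 2 * C₁ + 2 * C₁ * L' * M with hKdef
  have hK : 0 ≤ K := by positivity
  -- integrability of the integrands in `hessV`
  have hInt : ∀ (η' : (Fin p → ℝ) → ℝ), MemLp η' 2 (volume.restrict Ω) →
      ∀ θ' ∈ Θ, ∀ j k : Fin q,
      Integrable (fun x => 2 * (dys x θ' j * dys x θ' k - (η' x - ys x θ') * d2ys x θ' j k))
        (volume.restrict Ω) := by
    intro η' hη' θ' hθ' j k
    have hη'_int : Integrable η' (volume.restrict Ω) := hη'.integrable one_le_two
    have mdj : AEStronglyMeasurable (fun x => dys x θ' j) (volume.restrict Ω) :=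
      (continuous_apply j).comp_aestronglyMeasurable (hdys_meas θ' hθ')
    have mdk : AEStronglyMeasurable (fun x => dys x θ' k) (volume.restrict Ω) :=
      (continuous_apply k).comp_aestronglyMeasurable (hdys_meas θ' hθ')
    have meas : AEStronglyMeasurable
        (fun x => 2 * (dys x θ' j * dys x θ' k - (η' x - ys x θ') * d2ys x θ' j k))
        (volume.restrict Ω) :=
      (((mdj.mul mdk).sub (((hη'.aestronglyMeasurable).sub (hys_meas θ' hθ')).mul
        (hd2ys_meas θ' hθ' j k))).const_mul 2)
    have hg_int : Integrable (fun x => 2 * C₁ * C₁ + 2 * C₁ * C₁ + 2 * C₁ * |η' x|)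
        (volume.restrict Ω) :=
      (integrable_const _).add (hη'_int.abs.const_mul (2 * C₁))
    refine hg_int.mono' meas ?_
    filter_upwards [ae_restrict_mem hΩm] with x hx
    have b1 : |dys x θ' j| ≤ C₁ := le_trans (abs_apply_le_euclNorm _ j) (hdys_bdd x hx θ' hθ')
    have b2 : |dys x θ' k| ≤ C₁ := le_trans (abs_apply_le_euclNorm _ k) (hdys_bdd x hx θ' hθ')
    have b3 : |ys x θ'| ≤ C₁ := hys_bdd x hx θ' hθ'
    have b4 : |d2ys x θ' j k| ≤ C₁ := hd2ys_bdd x hx θ' hθ' j k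
    rw [Real.norm_eq_abs]
    have e1 : |dys x θ' j * dys x θ' k| ≤ C₁ * C₁ := by
      rw [abs_mul]; exact mul_le_mul b1 b2 (abs_nonneg _) hC₁
    have e2 : |(η' x - ys x θ') * d2ys x θ' j k| ≤ (|η' x| + C₁) * C₁ := by
      rw [abs_mul]
      exact mul_le_mul (le_trans (abs_sub _ _) (by linarith)) b4 (abs_nonneg _)
        (by positivity)
    calc |2 * (dys x θ' j * dys x θ' k - (η' x - ys x θ') * d2ys x θ' j k)|
        = 2 * |dys x θ' j * dys x θ' k - (η' x - ys x θ') * d2ys x θ' j k| := by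
          rw [abs_mul]; norm_num
      _ ≤ 2 * (|dys x θ' j * dys x θ' k| + |(η' x - ys x θ') * d2ys x θ' j k|) := by
          have := abs_sub (dys x θ' j * dys x θ' k) ((η' x - ys x θ') * d2ys x θ' j k)
          linarith
      _ ≤ 2 * (C₁ * C₁ + (|η' x| + C₁) * C₁) := by linarith
      _ ≤ 2 * C₁ * C₁ + 2 * C₁ * C₁ + 2 * C₁ * |η' x| := by ring_nf; linarith
  refine ⟨q * K + 1, by positivity, ε₀, hε₀, ?_⟩
  intro η hη hd
  set d := L2dist Ω η η₀ with hddef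
  have hd0 : 0 ≤ d := Real.sqrt_nonneg _
  set θ := thetaStar η with hθdef
  have hθmem : θ ∈ Θ := hθΘ η
  set t := euclNorm (θ - θ₀) with htdef
  have ht0 : 0 ≤ t := euclNorm_nonneg _
  have ht : t ≤ L' * d :=
    (hLip η hη hd).trans (mul_le_mul_of_nonneg_right (le_max_left _ _) hd0)
  have hη_int : Integrable η (volume.restrict Ω) := hη.integrable one_le_two
  have hΔ_int : Integrable (fun x => η x - η₀ x) (volume.restrict Ω) := hη_int.sub hη₀_int
  -- Cauchy–Schwarz : ∫ |η - η₀| ≤ d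
  have hCS : ∫ x in Ω, |η x - η₀ x| ≤ d := by
    have := integral_abs_le_sqrt_integral_sq (μ := volume.restrict Ω)
      (f := fun x => η x - η₀ x) (hη.sub hη₀)
    simpa [hddef, L2dist] using this
  -- entrywise bound
  have hentry : ∀ j k : Fin q,
      |hessV Ω ys dys d2ys η θ j k - hessV Ω ys dys d2ys η₀ θ₀ j k| ≤ K * d := by
    intro j k
    have hI1 := hInt η hη θ hθmem j k
    have hI2 := hInt η₀ hη₀ θ₀ hθ₀Θ j k
    have hsub : hessV Ω ys dys d2ys η θ j k - hessV Ω ys dys d2ys η₀ θ₀ j k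
        = ∫ x in Ω, (2 * (dys x θ j * dys x θ k - (η x - ys x θ) * d2ys x θ j k)
          - 2 * (dys x θ₀ j * dys x θ₀ k - (η₀ x - ys x θ₀) * d2ys x θ₀ j k)) := by
      rw [integral_sub hI1 hI2]; rfl
    rw [hsub]
    have habs : |∫ x in Ω, (2 * (dys x θ j * dys x θ k - (η x - ys x θ) * d2ys x θ j k)
          - 2 * (dys x θ₀ j * dys x θ₀ k - (η₀ x - ys x θ₀) * d2ys x θ₀ j k))|
        ≤ ∫ x in Ω, |2 * (dys x θ j * dys x θ k - (η x - ys x θ) * d2ys x θ j k)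
          - 2 * (dys x θ₀ j * dys x θ₀ k - (η₀ x - ys x θ₀) * d2ys x θ₀ j k)| := by
      simpa [Real.norm_eq_abs] using
        norm_integral_le_integral_norm (μ := volume.restrict Ω)
          (f := fun x => 2 * (dys x θ j * dys x θ k - (η x - ys x θ) * d2ys x θ j k)
            - 2 * (dys x θ₀ j * dys x θ₀ k - (η₀ x - ys x θ₀) * d2ys x θ₀ j k))
    refine habs.trans ?_
    have hg_int : Integrable
        (fun x => 8 * C₁ ^ 2 * t + 2 * C₁ * |η x - η₀ x| + 2 * C₁ * t * |η₀ x|)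
        (volume.restrict Ω) :=
      ((integrable_const _).add (hΔ_int.abs.const_mul (2 * C₁))).add
        (hη₀_int.abs.const_mul (2 * C₁ * t))
    have hmono : ∫ x in Ω, |2 * (dys x θ j * dys x θ k - (η x - ys x θ) * d2ys x θ j k)
          - 2 * (dys x θ₀ j * dys x θ₀ k - (η₀ x - ys x θ₀) * d2ys x θ₀ j k)|
        ≤ ∫ x in Ω, (8 * C₁ ^ 2 * t + 2 * C₁ * |η x - η₀ x| + 2 * C₁ * t * |η₀ x|) := by
      refine setIntegral_mono_on (hI1.sub hI2).abs hg_int hΩm ?_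
      intro x hx
      -- pointwise bounds
      have bj : |dys x θ j| ≤ C₁ := le_trans (abs_apply_le_euclNorm _ j) (hdys_bdd x hx θ hθmem)
      have bk : |dys x θ k| ≤ C₁ := le_trans (abs_apply_le_euclNorm _ k) (hdys_bdd x hx θ hθmem)
      have b0j : |dys x θ₀ j| ≤ C₁ :=
        le_trans (abs_apply_le_euclNorm _ j) (hdys_bdd x hx θ₀ hθ₀Θ)
      have b0k : |dys x θ₀ k| ≤ C₁ :=
        le_trans (abs_apply_le_euclNorm _ k) (hdys_bdd x hx θ₀ hθ₀Θ)
      have bdj : |dys x θ j - dys x θ₀ j| ≤ C₁ * t := by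
        have h1 : |dys x θ j - dys x θ₀ j| = |(dys x θ - dys x θ₀) j| := by simp [Pi.sub_apply]
        rw [h1]
        exact le_trans (abs_apply_le_euclNorm _ j) (hdys_lip x hx θ hθmem θ₀ hθ₀Θ)
      have bdk : |dys x θ k - dys x θ₀ k| ≤ C₁ * t := by
        have h1 : |dys x θ k - dys x θ₀ k| = |(dys x θ - dys x θ₀) k| := by simp [Pi.sub_apply]
        rw [h1]
        exact le_trans (abs_apply_le_euclNorm _ k) (hdys_lip x hx θ hθmem θ₀ hθ₀Θ)
      have bys : |ys x θ - ys x θ₀| ≤ C₁ * t := hys_lip x hx θ hθmem θ₀ hθ₀Θ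
      have bd2 : |d2ys x θ j k| ≤ C₁ := hd2ys_bdd x hx θ hθmem j k
      have bd2' : |d2ys x θ j k - d2ys x θ₀ j k| ≤ C₁ * t := hd2ys_lip x hx θ hθmem θ₀ hθ₀Θ j k
      have bys0 : |ys x θ₀| ≤ C₁ := hys_bdd x hx θ₀ hθ₀Θ
      -- first product
      have e1 : |dys x θ j * dys x θ k - dys x θ₀ j * dys x θ₀ k| ≤ 2 * C₁ ^ 2 * t := by
        have hr : dys x θ j * dys x θ k - dys x θ₀ j * dys x θ₀ k
            = dys x θ j * (dys x θ k - dys x θ₀ k) + (dys x θ j - dys x θ₀ j) * dys x θ₀ k := by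
          ring
        rw [hr]
        refine (abs_add_le _ _).trans ?_
        rw [abs_mul, abs_mul]
        have m1 : |dys x θ j| * |dys x θ k - dys x θ₀ k| ≤ C₁ * (C₁ * t) :=
          mul_le_mul bj bdk (abs_nonneg _) hC₁
        have m2 : |dys x θ j - dys x θ₀ j| * |dys x θ₀ k| ≤ C₁ * t * C₁ :=
          mul_le_mul bdj b0k (abs_nonneg _) (by positivity)
        nlinarith [m1, m2]
      -- second product
      have e2 : |(η x - ys x θ) * d2ys x θ j k - (η₀ x - ys x θ₀) * d2ys x θ₀ j k|
          ≤ (|η x - η₀ x| + C₁ * t) * C₁ + (|η₀ x| + C₁) * (C₁ * t) := by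
        have hr : (η x - ys x θ) * d2ys x θ j k - (η₀ x - ys x θ₀) * d2ys x θ₀ j k
            = ((η x - η₀ x) - (ys x θ - ys x θ₀)) * d2ys x θ j k
              + (η₀ x - ys x θ₀) * (d2ys x θ j k - d2ys x θ₀ j k) := by ring
        rw [hr]
        refine (abs_add_le _ _).trans ?_
        rw [abs_mul, abs_mul]
        have m1 : |(η x - η₀ x) - (ys x θ - ys x θ₀)| ≤ |η x - η₀ x| + C₁ * t :=
          le_trans (abs_sub _ _) (by linarith)
        have m2 : |η₀ x - ys x θ₀| ≤ |η₀ x| + C₁ := le_trans (abs_sub _ _) (by linarith)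
        have p1 : |(η x - η₀ x) - (ys x θ - ys x θ₀)| * |d2ys x θ j k|
            ≤ (|η x - η₀ x| + C₁ * t) * C₁ :=
          mul_le_mul m1 bd2 (abs_nonneg _) (by positivity)
        have p2 : |η₀ x - ys x θ₀| * |d2ys x θ j k - d2ys x θ₀ j k|
            ≤ (|η₀ x| + C₁) * (C₁ * t) :=
          mul_le_mul m2 bd2' (abs_nonneg _) (by positivity)
        linarith
      -- combine
      have hr : 2 * (dys x θ j * dys x θ k - (η x - ys x θ) * d2ys x θ j k)
          - 2 * (dys x θ₀ j * dys x θ₀ k - (η₀ x - ys x θ₀) * d2ys x θ₀ j k)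
          = 2 * ((dys x θ j * dys x θ k - dys x θ₀ j * dys x θ₀ k)
            - ((η x - ys x θ) * d2ys x θ j k - (η₀ x - ys x θ₀) * d2ys x θ₀ j k)) := by ring
      rw [hr, abs_mul]
      have := abs_sub (dys x θ j * dys x θ k - dys x θ₀ j * dys x θ₀ k)
        ((η x - ys x θ) * d2ys x θ j k - (η₀ x - ys x θ₀) * d2ys x θ₀ j k)
      have h2 : |(2:ℝ)| = 2 := by norm_num
      rw [h2]
      nlinarith [this, e1, e2]
    refine hmono.trans ?_
    -- compute/bound the integral of the dominating function
    have hsplit : ∫ x in Ω, (8 * C₁ ^ 2 * t + 2 * C₁ * |η x - η₀ x| + 2 * C₁ * t * |η₀ x|)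
        = 8 * C₁ ^ 2 * t + 2 * C₁ * (∫ x in Ω, |η x - η₀ x|) + 2 * C₁ * t * M := by
      have h1 : Integrable (fun x => 8 * C₁ ^ 2 * t + 2 * C₁ * |η x - η₀ x|)
          (volume.restrict Ω) := (integrable_const _).add (hΔ_int.abs.const_mul (2 * C₁))
      have h2 : Integrable (fun x => 2 * C₁ * t * |η₀ x|) (volume.restrict Ω) :=
        hη₀_int.abs.const_mul (2 * C₁ * t)
      have h3 : Integrable (fun x => 2 * C₁ * |η x - η₀ x|) (volume.restrict Ω) :=
        hΔ_int.abs.const_mul (2 * C₁)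
      rw [integral_add h1 h2, integral_add (integrable_const _) h3, integral_const_mul,
        integral_const_mul, integral_const_mul, integral_const]
      simp [hvol, hMdef]
    rw [hsplit]
    have b1 : 8 * C₁ ^ 2 * t ≤ 8 * C₁ ^ 2 * (L' * d) :=
      mul_le_mul_of_nonneg_left ht (by positivity)
    have b2 : 2 * C₁ * (∫ x in Ω, |η x - η₀ x|) ≤ 2 * C₁ * d :=
      mul_le_mul_of_nonneg_left hCS (by positivity)
    have b3 : 2 * C₁ * t * M ≤ 2 * C₁ * (L' * d) * M :=
      mul_le_mul_of_nonneg_right (mul_le_mul_of_nonneg_left ht (by positivity)) hM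
    have : K * d = 8 * C₁ ^ 2 * (L' * d) + 2 * C₁ * d + 2 * C₁ * (L' * d) * M := by
      rw [hKdef]; ring
    linarith
  -- assemble the Frobenius-norm bound
  have hfrob : frobNorm (hessV Ω ys dys d2ys η θ - hessV Ω ys dys d2ys η₀ θ₀) ≤ q * (K * d) := by
    refine frobNorm_le_of_entries _ (K * d) (by positivity) ?_
    intro j k
    have := hentry j k
    simpa [Matrix.sub_apply] using this
  refine hfrob.trans ?_
  have hq : (q : ℝ) * K ≤ (q : ℝ) * K + 1 := by linarith
  calc (q : ℝ) * (K * d) = ((q : ℝ) * K) * d := by ring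
    _ ≤ ((q : ℝ) * K + 1) * d := mul_le_mul_of_nonneg_right hq hd0
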